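/- Let α, β, k > 0, T_m ∈ ℝ, 0 < s0 ≤ s_r. Let s : [0, ∞) → ℝ be nondecreasing with s(0) = s0, and let T : ℝ × [0, ∞) → ℝ satisfy T(x,t) ≥ T_m for all t ≥ 0 and all x ∈ (0, s(t)), with x ↦ T(x,t) integrable on (0, s(t)). If for all t ≥ 0 the barrier value h1(t) := -((k/α)·∫₀^{s(t)} (T(x,t) - T_m) dx + (k/β)·(s(t) - s_r)) is nonnegative, then 0 < s0 ≤ s(t) ≤ s_r for all t ≥ 0. -/

import Mathlib

open MeasureTheory

/-- Interface-constraint part of Lemma 2: nonnegativity of the energy-type barrier `h1`,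
together with `T ≥ T_m` on the liquid domain and monotonicity of the interface,
confines the interface between `s0` and the setpoint `s_r`. -/
theorem stmt_9 (α β k T_m s0 s_r : ℝ) (hα : 0 < α) (hβ : 0 < β) (hk : 0 < k)
    (hs0 : 0 < s0) (hs0r : s0 ≤ s_r)
    (s : ℝ → ℝ) (hs_mono : MonotoneOn s (Set.Ici 0)) (hs_init : s 0 = s0)
    (T : ℝ → ℝ → ℝ)
    (hT : ∀ t ≥ (0:ℝ), ∀ x ∈ Set.Ioo (0:ℝ) (s t), T_m ≤ T x t)
    (hT_int : ∀ t ≥ (0:ℝ), IntervalIntegrable (fun x => T x t) volume 0 (s t))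
    (hh1 : ∀ t ≥ (0:ℝ),
      0 ≤ -((k / α) * (∫ x in (0:ℝ)..(s t), (T x t - T_m)) + (k / β) * (s t - s_r))) :
    ∀ t ≥ (0:ℝ), 0 < s0 ∧ s0 ≤ s t ∧ s t ≤ s_r := by
  intro t ht
  have hst : s0 ≤ s t := by
    rw [← hs_init]
    exact hs_mono (Set.mem_Ici.2 (le_refl (0:ℝ))) (Set.mem_Ici.2 ht) ht
  refine ⟨hs0, hst, ?_⟩
  have hstpos : (0:ℝ) ≤ s t := le_trans hs0.le hst
  have hint : 0 ≤ ∫ x in (0:ℝ)..(s t), (T x t - T_m) := by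
    apply intervalIntegral.integral_nonneg_of_ae_restrict hstpos
    have h1 : ∀ᵐ x ∂(volume.restrict (Set.Icc (0:ℝ) (s t))),
        x ∈ Set.Ioo (0:ℝ) (s t) → 0 ≤ T x t - T_m := by
      filter_upwards with x hx
      linarith [hT t ht x hx]
    have hne : ∀ᵐ x ∂volume, x ≠ 0 ∧ x ≠ s t := by
      have h0 : ∀ᵐ x ∂(volume : Measure ℝ), x ≠ 0 := by
        exact compl_mem_ae_iff.2 (Real.volume_singleton (a := 0))
      have h1 : ∀ᵐ x ∂(volume : Measure ℝ), x ≠ s t := by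
        exact compl_mem_ae_iff.2 (Real.volume_singleton (a := s t))
      exact h0.and h1
    filter_upwards [h1, ae_restrict_of_ae hne, ae_restrict_mem measurableSet_Icc]
      with x hx1 hx2 hx3
    exact hx1 ⟨lt_of_le_of_ne hx3.1 (Ne.symm hx2.1), lt_of_le_of_ne hx3.2 hx2.2⟩
  have := hh1 t ht
  have hα' : 0 < k / α := div_pos hk hα
  have hβ' : 0 < k / β := div_pos hk hβ
  nlinarith [mul_nonneg hα'.le hint]
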